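/- Let c, g ∈ ℝ with c² + 4g > 0, let ε ∈ {−1, 1}, and set φ₀^- = (c − √(c² + 4g))/2, l₁ = −(c + 3√(c² + 4g))/3, l₂ = (c² + 6g − c√(c² + 4g))/6. Let φ be differentiable on an open interval I with φ(ξ) ≠ 0 and φ(ξ)² + l₁φ(ξ) + l₂ > 0 for all ξ ∈ I, satisfying the orbit equation φ′(ξ) = ε·(φ(ξ) − φ₀^-)·√(φ(ξ)² + l₁φ(ξ) + l₂)/(2φ(ξ)) on I. Then φ is twice differentiable on I and satisfies the once-integrated travelling-wave equation −cφ + φ² − 2(φ′)² − 2φφ″ = g on I; hence u(x,t) = φ(x − ct) is a travelling wave solution of the osmosis K(2,2) equation. -/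

import Mathlib

/-- A solution `φ` of the orbit equation
`φ′ = ε (φ − φ₀^-) √(φ² + l₁φ + l₂)/(2φ)` (with `ε = ±1`) on an open interval `I`
(with `φ ≠ 0` and `φ² + l₁φ + l₂ > 0` on `I`) is twice differentiable and satisfies the
once-integrated travelling-wave equation `−cφ + φ² − 2(φ′)² − 2φφ″ = g` on `I`;
hence `u(x,t) = φ(x − ct)` is a travelling wave solution of the osmosis K(2,2) equation. -/
theorem osmosis_K22_orbit_solves_ode
    (c g : ℝ) (hcg : 0 < c ^ 2 + 4 * g)
    (ε : ℝ) (hε : ε = -1 ∨ ε = 1)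
    (φ0m l1 l2 : ℝ)
    (hφ0m : φ0m = (c - Real.sqrt (c ^ 2 + 4 * g)) / 2)
    (hl1 : l1 = -(c + 3 * Real.sqrt (c ^ 2 + 4 * g)) / 3)
    (hl2 : l2 = (c ^ 2 + 6 * g - c * Real.sqrt (c ^ 2 + 4 * g)) / 6)
    (I : Set ℝ) (hI : IsOpen I) (hIconv : Convex ℝ I)
    (φ : ℝ → ℝ)
    (hne : ∀ ξ ∈ I, φ ξ ≠ 0)
    (hpos : ∀ ξ ∈ I, 0 < (φ ξ) ^ 2 + l1 * φ ξ + l2)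
    (horb : ∀ ξ ∈ I, HasDerivAt φ
      (ε * (φ ξ - φ0m) * Real.sqrt ((φ ξ) ^ 2 + l1 * φ ξ + l2) / (2 * φ ξ)) ξ) :
    (∀ ξ ∈ I, DifferentiableAt ℝ (deriv φ) ξ) ∧
    (∀ ξ ∈ I, -c * φ ξ + (φ ξ) ^ 2 - 2 * (deriv φ ξ) ^ 2
      - 2 * φ ξ * deriv (deriv φ) ξ = g) := by
  set s : ℝ := Real.sqrt (c ^ 2 + 4 * g) with hs
  have hs2 : s ^ 2 = c ^ 2 + 4 * g := Real.sq_sqrt hcg.le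
  have key : ∀ ξ ∈ I, HasDerivAt (deriv φ)
      (((ε * (ε * (φ ξ - φ0m) * Real.sqrt ((φ ξ) ^ 2 + l1 * φ ξ + l2) / (2 * φ ξ)) *
          Real.sqrt ((φ ξ) ^ 2 + l1 * φ ξ + l2)
        + ε * (φ ξ - φ0m) *
          ((2 * φ ξ ^ 1 * (ε * (φ ξ - φ0m) * Real.sqrt ((φ ξ) ^ 2 + l1 * φ ξ + l2) / (2 * φ ξ))
            + l1 * (ε * (φ ξ - φ0m) * Real.sqrt ((φ ξ) ^ 2 + l1 * φ ξ + l2) / (2 * φ ξ)))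
            / (2 * Real.sqrt ((φ ξ) ^ 2 + l1 * φ ξ + l2)))) * (2 * φ ξ)
        - ε * (φ ξ - φ0m) * Real.sqrt ((φ ξ) ^ 2 + l1 * φ ξ + l2) *
          (2 * (ε * (φ ξ - φ0m) * Real.sqrt ((φ ξ) ^ 2 + l1 * φ ξ + l2) / (2 * φ ξ))))
        / (2 * φ ξ) ^ 2) ξ := by
    intro ξ hξ
    have hφ' := horb ξ hξ
    have hQ := hpos ξ hξ
    have h1 : HasDerivAt (fun ζ => (φ ζ) ^ 2 + l1 * φ ζ + l2)
        (2 * φ ξ ^ 1 * (ε * (φ ξ - φ0m) * Real.sqrt ((φ ξ) ^ 2 + l1 * φ ξ + l2) / (2 * φ ξ))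
          + l1 * (ε * (φ ξ - φ0m) * Real.sqrt ((φ ξ) ^ 2 + l1 * φ ξ + l2) / (2 * φ ξ))) ξ := by
      have := ((hφ'.pow 2).add (hφ'.const_mul l1)).add_const l2
      exact this.congr_deriv (by norm_num)
    have h2 := h1.sqrt hQ.ne'
    have h3 : HasDerivAt (fun ζ => ε * (φ ζ - φ0m))
        (ε * (ε * (φ ξ - φ0m) * Real.sqrt ((φ ξ) ^ 2 + l1 * φ ξ + l2) / (2 * φ ξ))) ξ :=
      (hφ'.sub_const φ0m).const_mul ε
    have h4 := h3.mul h2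
    have h5 : HasDerivAt (fun ζ => 2 * φ ζ)
        (2 * (ε * (φ ξ - φ0m) * Real.sqrt ((φ ξ) ^ 2 + l1 * φ ξ + l2) / (2 * φ ξ))) ξ :=
      hφ'.const_mul 2
    have h6 := h4.div h5 (by
      have := hne ξ hξ; positivity)
    have hEq : deriv φ =ᶠ[nhds ξ]
        (fun ζ => ε * (φ ζ - φ0m) * Real.sqrt ((φ ζ) ^ 2 + l1 * φ ζ + l2) / (2 * φ ζ)) := by
      filter_upwards [hI.mem_nhds hξ] with ζ hζ
      exact (horb ζ hζ).deriv
    exact h6.congr_of_eventuallyEq hEq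
  refine ⟨fun ξ hξ => (key ξ hξ).differentiableAt, fun ξ hξ => ?_⟩
  have hp := hne ξ hξ
  have hQ := hpos ξ hξ
  have hr2 : Real.sqrt ((φ ξ) ^ 2 + l1 * φ ξ + l2) ^ 2 = (φ ξ) ^ 2 + l1 * φ ξ + l2 :=
    Real.sq_sqrt hQ.le
  have hrne : Real.sqrt ((φ ξ) ^ 2 + l1 * φ ξ + l2) ≠ 0 := (Real.sqrt_pos.mpr hQ).ne'
  rw [(key ξ hξ).deriv, (horb ξ hξ).deriv]
  set p := φ ξ
  set r := Real.sqrt (p ^ 2 + l1 * p + l2)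
  have hkey : 2 * (p - φ0m) * (p ^ 2 + l1 * p + l2) + (2 * p + l1) * (p - φ0m) ^ 2
      = 4 * p ^ 3 - 4 * c * p ^ 2 - 4 * g * p := by
    rw [hφ0m, hl1, hl2]
    linear_combination (c / 4 - s / 4 - 3 / 2 * p) * hs2
  rcases hε with h | h <;> subst h <;> field_simp <;>
    linear_combination (2 * p * φ0m - 2 * p ^ 2) * hr2 - p * hkey
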